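/- For n ≥ 5 and 1 ≤ m ≤ n−2, the 1-Wasserstein distance between the random-walk measures at u_0 and v_0 in the m-gluing graph K_n +_m K'_n equals (3n − 3m − 4)/(n + m). -/

import Mathlib

open scoped Classical
noncomputable section

namespace OR

variable {V : Type*}

/-- The degree of a vertex. -/
def deg (G : SimpleGraph V) (x : V) : ℕ := Nat.card (G.neighborSet x)

/-- The simple random walk measure at a vertex. -/
def rw (G : SimpleGraph V) (x : V) : V → ℝ :=
  fun v => if G.Adj x v then ((deg G x : ℝ))⁻¹ else 0

/-- A coupling between two measures on the vertex set. -/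
def IsCoupling (μ ν : V → ℝ) (A : V → V → ℝ) : Prop :=
  (∀ u v, 0 ≤ A u v) ∧
  (Function.support fun p : V × V => A p.1 p.2).Finite ∧
  (∀ u, ∑ᶠ v, A u v = μ u) ∧ (∀ v, ∑ᶠ u, A u v = ν v)

/-- The 1-Wasserstein distance w.r.t. the graph distance. -/
def W (G : SimpleGraph V) (μ ν : V → ℝ) : ℝ :=
  sInf { r | ∃ A, IsCoupling μ ν A ∧ r = ∑ᶠ u, ∑ᶠ v, A u v * (G.dist u v : ℝ) }

/-- The Ollivier–Ricci curvature. -/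
def ricci (G : SimpleGraph V) (x y : V) : ℝ :=
  1 - W G (rw G x) (rw G y) / (G.dist x y : ℝ)

/-- The number of common neighbours of `x` and `y`. -/
def tri (G : SimpleGraph V) (x y : V) : ℕ := Nat.card {w | G.Adj x w ∧ G.Adj y w}



/-- Condition for a cross edge `u_i v_j` in the `m`-gluing graph. -/
def cross (m : ℕ) {n : ℕ} (i j : Fin n) : Prop :=
  ((i : ℕ) = 0 ∧ (j : ℕ) = 0) ∨ ((i : ℕ) = 0 ∧ 1 ≤ (j : ℕ) ∧ (j : ℕ) ≤ m) ∨
    ((j : ℕ) = 0 ∧ 1 ≤ (i : ℕ) ∧ (i : ℕ) ≤ m)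

/-- Adjacency of the `m`-gluing graph: `Sum.inl` is `K_n`, `Sum.inr` is `K'_n`. -/
def glueAdj (n m : ℕ) : Fin n ⊕ Fin n → Fin n ⊕ Fin n → Prop
  | .inl i, .inl j => i ≠ j
  | .inr i, .inr j => i ≠ j
  | .inl i, .inr j => cross m i j
  | .inr j, .inl i => cross m i j

/-- The `m`-gluing graph `K_n +_m K'_n`. -/
def glue (n m : ℕ) : SimpleGraph (Fin n ⊕ Fin n) where
  Adj := glueAdj n m
  symm := ⟨by
    rintro (i | i) (j | j) h <;> simp only [glueAdj] at h ⊢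
    · exact h.symm
    · exact h
    · exact h
    · exact h.symm⟩
  loopless := ⟨by
    rintro (i | i) h <;> simp only [glueAdj] at h <;> exact h rfl⟩

end OR


namespace GW
open OR SimpleGraph Finset

variable {n m : ℕ}

lemma adj_ll {i j : Fin n} : (glue n m).Adj (.inl i) (.inl j) ↔ i ≠ j := Iff.rfl
lemma adj_rr {i j : Fin n} : (glue n m).Adj (.inr i) (.inr j) ↔ i ≠ j := Iff.rfl
lemma adj_lr {i j : Fin n} : (glue n m).Adj (.inl i) (.inr j) ↔ cross m i j := Iff.rfl
lemma adj_rl {i j : Fin n} : (glue n m).Adj (.inr j) (.inl i) ↔ cross m i j := Iff.rfl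

lemma reach (hn : 5 ≤ n) (x y : Fin n ⊕ Fin n) : (glue n m).Reachable x y := by
  have hz : (0:ℕ) < n := by omega
  set z : Fin n := ⟨0, hz⟩ with hzdef
  have hlz : ∀ i : Fin n, (glue n m).Reachable (Sum.inl i) (Sum.inl z) := by
    intro i
    by_cases h : i = z
    · rw [h]
    · exact (adj_ll.mpr h).reachable
  have key : ∀ w, (glue n m).Reachable w (Sum.inl z) := by
    intro w
    match w with
    | .inl i => exact hlz i
    | .inr j =>
      have h1 : (glue n m).Adj (Sum.inr z) (Sum.inl z) := by
        rw [adj_rl]; left; exact ⟨rfl, rfl⟩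
      by_cases h : j = z
      · rw [h]; exact h1.reachable
      · exact ((adj_rr.mpr h).reachable).trans h1.reachable
  exact (key x).trans (key y).symm

lemma one_le_dist (hn : 5 ≤ n) {x y : Fin n ⊕ Fin n} (hne : x ≠ y) :
    1 ≤ (glue n m).dist x y := by
  rcases Nat.eq_zero_or_pos ((glue n m).dist x y) with h | h
  · exact absurd (((reach hn x y).dist_eq_zero_iff).mp h) hne
  · omega

lemma two_le_dist (hn : 5 ≤ n) {x y : Fin n ⊕ Fin n} (hne : x ≠ y)
    (hna : ¬ (glue n m).Adj x y) : 2 ≤ (glue n m).dist x y := by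
  have h1 := one_le_dist hn hne (m := m)
  rcases Nat.lt_or_ge ((glue n m).dist x y) 2 with h | h
  · have : (glue n m).dist x y = 1 := by omega
    exact absurd (SimpleGraph.dist_eq_one_iff_adj.mp this) hna
  · exact h

lemma three_le_dist (hn : 5 ≤ n) {x y : Fin n ⊕ Fin n} (hne : x ≠ y)
    (hna : ¬ (glue n m).Adj x y)
    (hw : ∀ w, ¬((glue n m).Adj x w ∧ (glue n m).Adj w y)) :
    3 ≤ (glue n m).dist x y := by
  have h2 := two_le_dist hn hne hna
  by_contra hcon
  have hd : (glue n m).dist x y = 2 := by omega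
  obtain ⟨p, hp⟩ := (reach hn x y).exists_walk_length_eq_dist
  rw [hd] at hp
  cases p with
  | nil => simp at hp
  | cons h q =>
    cases q with
    | nil => simp at hp
    | cons h' q' =>
      have hq' : q'.length = 0 := by
        simp only [SimpleGraph.Walk.length_cons] at hp; omega
      have heq := SimpleGraph.Walk.eq_of_length_eq_zero hq'
      subst heq
      exact hw _ ⟨h, h'⟩


-- no common neighbour / no adjacency for deep cross pairs
lemma three_le_dist_lr (hn : 5 ≤ n) (hm : 1 ≤ m) {i j : Fin n}
    (hi : m + 1 ≤ (i:ℕ)) (hj : m + 1 ≤ (j:ℕ)) :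
    3 ≤ (glue n m).dist (.inl i) (.inr j) := by
  apply three_le_dist hn (by simp)
  · rw [adj_lr]; unfold OR.cross; omega
  · rintro (k | k) ⟨h1, h2⟩
    · rw [adj_lr] at h2; unfold OR.cross at h2; omega
    · rw [adj_lr] at h1; unfold OR.cross at h1; omega

lemma dist_lr_eq_three (hn : 5 ≤ n) (hm : 1 ≤ m) (hm' : m ≤ n - 2) {i j : Fin n}
    (hi : m + 1 ≤ (i:ℕ)) (hj : m + 1 ≤ (j:ℕ)) :
    (glue n m).dist (.inl i) (.inr j) = 3 := by
  have h3 := three_le_dist_lr hn hm hi hj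
  have hz : (0:ℕ) < n := by omega
  set z : Fin n := ⟨0, hz⟩ with hzdef
  have a1 : (glue n m).Adj (.inl i) (.inl z) := by
    rw [adj_ll]; intro h; rw [Fin.ext_iff] at h; simp [hzdef] at h; omega
  have a2 : (glue n m).Adj (.inl z) (.inr z) := by
    rw [adj_lr]; left; exact ⟨rfl, rfl⟩
  have a3 : (glue n m).Adj (.inr z) (.inr j) := by
    rw [adj_rr]; intro h; rw [Fin.ext_iff] at h; simp [hzdef] at h; omega
  have hle := SimpleGraph.dist_le (Walk.cons a1 (Walk.cons a2 (Walk.cons a3 Walk.nil)))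
  simp at hle
  omega

lemma dist_ll_one {i j : Fin n} (h : i ≠ j) : (glue n m).dist (.inl i) (.inl j) = 1 :=
  SimpleGraph.dist_eq_one_iff_adj.mpr (adj_ll.mpr h)
lemma dist_rr_one {i j : Fin n} (h : i ≠ j) : (glue n m).dist (.inr i) (.inr j) = 1 :=
  SimpleGraph.dist_eq_one_iff_adj.mpr (adj_rr.mpr h)

-- counting helper
lemma sum_ite_card {M : Type*} [NonAssocSemiring M] {P : ℕ → Prop} [DecidablePred P]
    (c : M) (s : Finset ℕ) :
    ∑ k ∈ s, (if P k then c else 0) = ((s.filter P).card : M) * c := by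
  rw [← Finset.sum_filter, Finset.sum_const, nsmul_eq_mul]

lemma deg_l0 (hn : 5 ≤ n) (hm : 1 ≤ m) (hm' : m ≤ n - 2) :
    deg (glue n m) (Sum.inl (⟨0, lt_of_lt_of_le (by norm_num) hn⟩ : Fin n)) = n + m := by
  unfold OR.deg
  rw [Nat.card_eq_fintype_card, Fintype.card_subtype]
  rw [Finset.card_filter]
  rw [Fintype.sum_sum_type]
  have e1 : ∀ i : Fin n, (if Sum.inl i ∈ (glue n m).neighborSet (Sum.inl (⟨0, lt_of_lt_of_le (by norm_num) hn⟩ : Fin n)) then 1 else 0)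
      = (fun k : ℕ => if 1 ≤ k then 1 else 0) (i : ℕ) := by
    intro i
    simp only [SimpleGraph.mem_neighborSet, adj_ll]
    by_cases h : (⟨0, lt_of_lt_of_le (by norm_num) hn⟩ : Fin n) = i
    · simp [← h]
    · rw [if_pos h, if_pos]
      rw [Fin.ext_iff] at h; simp at h; omega
  have e2 : ∀ j : Fin n, (if Sum.inr j ∈ (glue n m).neighborSet (Sum.inl (⟨0, lt_of_lt_of_le (by norm_num) hn⟩ : Fin n)) then 1 else 0)
      = (fun k : ℕ => if k ≤ m then 1 else 0) (j : ℕ) := by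
    intro j
    simp only [SimpleGraph.mem_neighborSet, adj_lr]
    unfold OR.cross
    by_cases h : (j:ℕ) ≤ m
    · rw [if_pos, if_pos h]; simp; omega
    · rw [if_neg, if_neg h]; simp; omega
  rw [Finset.sum_congr rfl (fun i _ => e1 i), Finset.sum_congr rfl (fun j _ => e2 j)]
  rw [Fin.sum_univ_eq_sum_range (fun k : ℕ => if 1 ≤ k then 1 else 0) n,
    Fin.sum_univ_eq_sum_range (fun k : ℕ => if k ≤ m then 1 else 0) n]
  rw [sum_ite_card, sum_ite_card]
  have f1 : (range n).filter (fun k => 1 ≤ k) = Finset.Ico 1 n := by ext k; simp; omega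
  have f2 : (range n).filter (fun k => k ≤ m) = Finset.Ico 0 (m+1) := by ext k; simp; omega
  rw [f1, f2, Nat.card_Ico, Nat.card_Ico]
  simp; omega

lemma deg_r0 (hn : 5 ≤ n) (hm : 1 ≤ m) (hm' : m ≤ n - 2) :
    deg (glue n m) (Sum.inr (⟨0, lt_of_lt_of_le (by norm_num) hn⟩ : Fin n)) = n + m := by
  unfold OR.deg
  rw [Nat.card_eq_fintype_card, Fintype.card_subtype]
  rw [Finset.card_filter]
  rw [Fintype.sum_sum_type]
  have e1 : ∀ i : Fin n, (if Sum.inl i ∈ (glue n m).neighborSet (Sum.inr (⟨0, lt_of_lt_of_le (by norm_num) hn⟩ : Fin n)) then 1 else 0)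
      = (fun k : ℕ => if k ≤ m then 1 else 0) (i : ℕ) := by
    intro i
    simp only [SimpleGraph.mem_neighborSet, adj_rl]
    unfold OR.cross
    by_cases h : (i:ℕ) ≤ m
    · rw [if_pos, if_pos h]; simp; omega
    · rw [if_neg, if_neg h]; simp; omega
  have e2 : ∀ j : Fin n, (if Sum.inr j ∈ (glue n m).neighborSet (Sum.inr (⟨0, lt_of_lt_of_le (by norm_num) hn⟩ : Fin n)) then 1 else 0)
      = (fun k : ℕ => if 1 ≤ k then 1 else 0) (j : ℕ) := by
    intro j
    simp only [SimpleGraph.mem_neighborSet, adj_rr]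
    by_cases h : (⟨0, lt_of_lt_of_le (by norm_num) hn⟩ : Fin n) = j
    · simp [← h]
    · rw [if_pos h, if_pos]
      rw [Fin.ext_iff] at h; simp at h; omega
  rw [Finset.sum_congr rfl (fun i _ => e1 i), Finset.sum_congr rfl (fun j _ => e2 j)]
  rw [Fin.sum_univ_eq_sum_range (fun k : ℕ => if k ≤ m then 1 else 0) n,
    Fin.sum_univ_eq_sum_range (fun k : ℕ => if 1 ≤ k then 1 else 0) n]
  rw [sum_ite_card, sum_ite_card]
  have f1 : (range n).filter (fun k => k ≤ m) = Finset.Ico 0 (m+1) := by ext k; simp; omega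
  have f2 : (range n).filter (fun k => 1 ≤ k) = Finset.Ico 1 n := by ext k; simp; omega
  rw [f1, f2, Nat.card_Ico, Nat.card_Ico]
  simp; omega


/-- target of the transport map -/
def T (n m : ℕ) (h : m + 1 < n) : Fin n ⊕ Fin n → Fin n ⊕ Fin n
  | .inl i => if (i:ℕ) = m+1 then .inl ⟨0, by omega⟩ else if (i:ℕ) ≤ m then .inl i else .inr i
  | .inr j => if (j:ℕ) = 0 then .inr ⟨m+1, h⟩ else .inr j

/-- whether a row is active -/
def act (n m : ℕ) : Fin n ⊕ Fin n → Prop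
  | .inl i => (i:ℕ) ≠ 0
  | .inr j => (j:ℕ) ≤ m

/-- the optimal coupling -/
def cpl (n m : ℕ) (h : m + 1 < n) : (Fin n ⊕ Fin n) → (Fin n ⊕ Fin n) → ℝ :=
  fun u v => if v = T n m h u ∧ act n m u then ((n:ℝ)+(m:ℝ))⁻¹ else 0

lemma sum_ite_eq_pair {α : Type*} [Fintype α] [DecidableEq α] (s : α) (P : Prop)
    [Decidable P] (c : ℝ) :
    ∑ u : α, (if u = s ∧ P then c else 0) = if P then c else 0 := by
  have h : ∀ u : α, (if u = s ∧ P then c else 0)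
      = if u = s then (if P then c else 0) else 0 := by
    intro u; by_cases h1 : u = s <;> by_cases h2 : P <;> simp [h1, h2]
  rw [Finset.sum_congr rfl (fun u _ => h u), Finset.sum_ite_eq' univ s]
  simp

lemma rw_l0 (hn : 5 ≤ n) (hm : 1 ≤ m) (hm' : m ≤ n - 2) :
    OR.rw (glue n m) (Sum.inl (⟨0, lt_of_lt_of_le (by norm_num) hn⟩ : Fin n))
      = fun u => if (glue n m).Adj (Sum.inl (⟨0, lt_of_lt_of_le (by norm_num) hn⟩ : Fin n)) u
          then ((n:ℝ)+(m:ℝ))⁻¹ else 0 := by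
  funext u; unfold OR.rw; rw [deg_l0 hn hm hm']; push_cast; rfl

lemma rw_r0 (hn : 5 ≤ n) (hm : 1 ≤ m) (hm' : m ≤ n - 2) :
    OR.rw (glue n m) (Sum.inr (⟨0, lt_of_lt_of_le (by norm_num) hn⟩ : Fin n))
      = fun u => if (glue n m).Adj (Sum.inr (⟨0, lt_of_lt_of_le (by norm_num) hn⟩ : Fin n)) u
          then ((n:ℝ)+(m:ℝ))⁻¹ else 0 := by
  funext u; unfold OR.rw; rw [deg_r0 hn hm hm']; push_cast; rfl

lemma row_marg (hn : 5 ≤ n) (hm : 1 ≤ m) (hm' : m ≤ n - 2) (h : m + 1 < n)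
    (u : Fin n ⊕ Fin n) :
    ∑ v : Fin n ⊕ Fin n, cpl n m h u v
      = OR.rw (glue n m) (Sum.inl (⟨0, lt_of_lt_of_le (by norm_num) hn⟩ : Fin n)) u := by
  rw [rw_l0 hn hm hm']
  dsimp only
  unfold cpl
  rw [sum_ite_eq_pair]
  cases u with
  | inl i =>
    have : (glue n m).Adj (Sum.inl (⟨0, lt_of_lt_of_le (by norm_num) hn⟩ : Fin n)) (Sum.inl i) ↔ act n m (Sum.inl i) := by
      rw [adj_ll]; unfold act; constructor
      · intro hne hv; exact hne (by rw [Fin.ext_iff]; simp [hv])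
      · intro hv hne; apply hv; rw [Fin.ext_iff] at hne; simp at hne; omega
    by_cases ha : act n m (Sum.inl i)
    · rw [if_pos ha, if_pos (this.mpr ha)]
    · rw [if_neg ha, if_neg (fun hh => ha (this.mp hh))]
  | inr j =>
    have : (glue n m).Adj (Sum.inl (⟨0, lt_of_lt_of_le (by norm_num) hn⟩ : Fin n)) (Sum.inr j) ↔ act n m (Sum.inr j) := by
      rw [adj_lr]; unfold OR.cross act; simp; omega
    by_cases ha : act n m (Sum.inr j)
    · rw [if_pos ha, if_pos (this.mpr ha)]
    · rw [if_neg ha, if_neg (fun hh => ha (this.mp hh))]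

lemma col_marg (hn : 5 ≤ n) (hm : 1 ≤ m) (hm' : m ≤ n - 2) (h : m + 1 < n)
    (v : Fin n ⊕ Fin n) :
    ∑ u : Fin n ⊕ Fin n, cpl n m h u v
      = OR.rw (glue n m) (Sum.inr (⟨0, lt_of_lt_of_le (by norm_num) hn⟩ : Fin n)) v := by
  rw [rw_r0 hn hm hm']
  dsimp only
  cases v with
  | inl i =>
    have key : ∀ u, cpl n m h u (Sum.inl i)
        = if u = (if (i:ℕ) = 0 then Sum.inl (⟨m+1, h⟩ : Fin n) else Sum.inl i) ∧ (i:ℕ) ≤ m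
            then ((n:ℝ)+(m:ℝ))⁻¹ else 0 := by
      rintro (k | k) <;>
        simp only [cpl, T, act] <;>
        split_ifs <;>
        first
          | rfl
          | (exfalso;
             simp only [Sum.inl.injEq, Sum.inr.injEq, Fin.ext_iff, Fin.val_mk, reduceCtorEq,
               not_and, ne_eq, and_imp, false_and, and_false, not_false_eq_true, not_true_eq_false] at *;
             omega)
          | (exfalso;
             simp only [Sum.inl.injEq, Sum.inr.injEq, Fin.ext_iff, Fin.val_mk, reduceCtorEq,
               not_and, ne_eq, and_imp, false_and, and_false, not_false_eq_true, not_true_eq_false] at *)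
    rw [Finset.sum_congr rfl (fun u _ => key u), sum_ite_eq_pair]
    have : (glue n m).Adj (Sum.inr (⟨0, lt_of_lt_of_le (by norm_num) hn⟩ : Fin n)) (Sum.inl i) ↔ (i:ℕ) ≤ m := by
      rw [adj_rl]; unfold OR.cross; simp; omega
    by_cases hi : (i:ℕ) ≤ m
    · rw [if_pos hi, if_pos (this.mpr hi)]
    · rw [if_neg hi, if_neg (fun hh => hi (this.mp hh))]
  | inr j =>
    have key : ∀ u, cpl n m h u (Sum.inr j)
        = if u = (if m+2 ≤ (j:ℕ) then Sum.inl j else if (j:ℕ) = m+1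
              then Sum.inr (⟨0, lt_of_lt_of_le (by norm_num) hn⟩ : Fin n) else Sum.inr j) ∧ (j:ℕ) ≠ 0
            then ((n:ℝ)+(m:ℝ))⁻¹ else 0 := by
      rintro (k | k) <;>
        simp only [cpl, T, act] <;>
        split_ifs <;>
        first
          | rfl
          | (exfalso;
             simp only [Sum.inl.injEq, Sum.inr.injEq, Fin.ext_iff, Fin.val_mk, reduceCtorEq,
               not_and, ne_eq, and_imp, false_and, and_false, not_false_eq_true, not_true_eq_false] at *;
             omega)
          | (exfalso;
             simp only [Sum.inl.injEq, Sum.inr.injEq, Fin.ext_iff, Fin.val_mk, reduceCtorEq,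
               not_and, ne_eq, and_imp, false_and, and_false, not_false_eq_true, not_true_eq_false] at *)
    rw [Finset.sum_congr rfl (fun u _ => key u), sum_ite_eq_pair]
    have : (glue n m).Adj (Sum.inr (⟨0, lt_of_lt_of_le (by norm_num) hn⟩ : Fin n)) (Sum.inr j) ↔ (j:ℕ) ≠ 0 := by
      rw [adj_rr]
      simp only [ne_eq, Fin.ext_iff, Fin.val_mk]
      omega
    by_cases hj : (j:ℕ) ≠ 0
    · rw [if_pos hj, if_pos (this.mpr hj)]
    · rw [if_neg hj, if_neg (fun hh => hj (this.mp hh))]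


lemma cast_npm_pos (hn : 5 ≤ n) : (0:ℝ) < (n:ℝ) + (m:ℝ) := by
  have h1 : (5:ℝ) ≤ (n:ℝ) := by exact_mod_cast hn
  have h2 : (0:ℝ) ≤ (m:ℝ) := by positivity
  linarith

lemma cost_eq (hn : 5 ≤ n) (hm : 1 ≤ m) (hm' : m ≤ n - 2) (h : m + 1 < n) :
    ∑ u : Fin n ⊕ Fin n, ∑ v : Fin n ⊕ Fin n,
        cpl n m h u v * ((glue n m).dist u v : ℝ)
      = (3 * (n : ℝ) - 3 * m - 4) / ((n : ℝ) + m) := by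
  set c : ℝ := ((n:ℝ)+(m:ℝ))⁻¹ with hc
  have inner : ∀ u, ∑ v : Fin n ⊕ Fin n, cpl n m h u v * ((glue n m).dist u v : ℝ)
      = if act n m u then c * ((glue n m).dist u (T n m h u) : ℝ) else 0 := by
    intro u
    have pw : ∀ v, cpl n m h u v * ((glue n m).dist u v : ℝ)
        = if v = T n m h u ∧ act n m u
            then c * ((glue n m).dist u (T n m h u) : ℝ) else 0 := by
      intro v
      unfold cpl
      by_cases h1 : v = T n m h u ∧ act n m u
      · rw [if_pos h1, if_pos h1, h1.1]
      · rw [if_neg h1, if_neg h1, zero_mul]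
    rw [Finset.sum_congr rfl (fun v _ => pw v), sum_ite_eq_pair]
  rw [Finset.sum_congr rfl (fun u _ => inner u), Fintype.sum_sum_type]
  have e1 : ∀ i : Fin n,
      (if act n m (Sum.inl i) then c * ((glue n m).dist (Sum.inl i) (T n m h (Sum.inl i)) : ℝ) else 0)
      = (fun k : ℕ => if k = m+1 then c else if m+2 ≤ k then 3*c else 0) (i:ℕ) := by
    intro i
    by_cases h1 : (i:ℕ) = m+1
    · have hT : T n m h (Sum.inl i) = Sum.inl (⟨0, lt_of_lt_of_le (by norm_num) hn⟩ : Fin n) := by simp [T, h1]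
      have hd : (glue n m).dist (Sum.inl i) (Sum.inl (⟨0, lt_of_lt_of_le (by norm_num) hn⟩ : Fin n)) = 1 :=
        dist_ll_one (by rw [Fin.ne_iff_vne]; simp; omega)
      rw [hT, hd, if_pos (by unfold act; omega)]
      simp [h1]
    · by_cases h2 : (i:ℕ) ≤ m
      · by_cases h3 : (i:ℕ) = 0
        · rw [if_neg (by unfold act; omega)]
          simp only []
          rw [if_neg (by omega), if_neg (by omega)]
        · have hT : T n m h (Sum.inl i) = Sum.inl i := by simp [T, h1, h2]
          rw [if_pos (by unfold act; omega), hT, SimpleGraph.dist_self]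
          simp only [Nat.cast_zero, mul_zero]
          rw [if_neg (by omega), if_neg (by omega)]
      · have hT : T n m h (Sum.inl i) = Sum.inr i := by simp [T, h1, h2]
        rw [if_pos (by unfold act; omega), hT,
          dist_lr_eq_three hn hm hm' (by omega) (by omega)]
        simp only []
        rw [if_neg (by omega), if_pos (by omega)]
        push_cast; ring
  have e2 : ∀ j : Fin n,
      (if act n m (Sum.inr j) then c * ((glue n m).dist (Sum.inr j) (T n m h (Sum.inr j)) : ℝ) else 0)
      = (fun k : ℕ => if k = 0 then c else 0) (j:ℕ) := by
    intro j
    by_cases h1 : (j:ℕ) = 0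
    · have hT : T n m h (Sum.inr j) = Sum.inr (⟨m+1, h⟩ : Fin n) := by simp [T, h1]
      have hd : (glue n m).dist (Sum.inr j) (Sum.inr (⟨m+1, h⟩ : Fin n)) = 1 :=
        dist_rr_one (by rw [Fin.ne_iff_vne]; simp; omega)
      rw [hT, hd, if_pos (by unfold act; omega)]
      simp [h1]
    · by_cases h2 : (j:ℕ) ≤ m
      · have hT : T n m h (Sum.inr j) = Sum.inr j := by simp [T, h1]
        rw [if_pos (by unfold act; omega), hT, SimpleGraph.dist_self]
        simp only [Nat.cast_zero, mul_zero]
        rw [if_neg (by omega)]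
      · rw [if_neg (by unfold act; omega)]
        simp only []
        rw [if_neg (by omega)]
  rw [Finset.sum_congr rfl (fun i _ => e1 i), Finset.sum_congr rfl (fun j _ => e2 j)]
  rw [Fin.sum_univ_eq_sum_range (fun k : ℕ => if k = m+1 then c else if m+2 ≤ k then 3*c else 0) n,
    Fin.sum_univ_eq_sum_range (fun k : ℕ => if k = 0 then c else 0) n]
  have split1 : ∀ k ∈ range n, (if k = m+1 then c else if m+2 ≤ k then 3*c else 0)
      = (if k = m+1 then c else 0) + (if m+2 ≤ k then 3*c else 0) := by
    intro k _
    split_ifs <;> first | (exfalso; omega) | ring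
  rw [Finset.sum_congr rfl split1, Finset.sum_add_distrib]
  rw [Finset.sum_ite_eq' (range n) (m+1) (fun _ => c),
    Finset.sum_ite_eq' (range n) 0 (fun _ => c)]
  rw [if_pos (Finset.mem_range.mpr (by omega)), if_pos (Finset.mem_range.mpr (by omega))]
  rw [sum_ite_card]
  have f1 : (range n).filter (fun k => m+2 ≤ k) = Finset.Ico (m+2) n := by
    ext k; simp; omega
  rw [f1, Nat.card_Ico]
  have hcast : ((n - (m+2) : ℕ) : ℝ) = (n:ℝ) - (m:ℝ) - 2 := by
    rw [Nat.cast_sub (by omega)]; push_cast; ring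
  rw [hcast, hc]
  have hne : ((n:ℝ) + (m:ℝ)) ≠ 0 := ne_of_gt (cast_npm_pos hn)
  field_simp
  ring


/-- the 1-Lipschitz potential -/
def fL (n m : ℕ) : Fin n ⊕ Fin n → ℝ
  | .inl i => if (i:ℕ) ≤ m then 2 else 3
  | .inr j => if (j:ℕ) ≤ m then 1 else 0

lemma fL_lip (hn : 5 ≤ n) (hm : 1 ≤ m) (x y : Fin n ⊕ Fin n) :
    fL n m x - fL n m y ≤ ((glue n m).dist x y : ℝ) := by
  have hd0 : (0:ℝ) ≤ ((glue n m).dist x y : ℝ) := Nat.cast_nonneg _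
  match x, y with
  | .inl i, .inl j =>
    simp only [fL] at *
    by_cases h1 : (i:ℕ) ≤ m <;> by_cases h2 : (j:ℕ) ≤ m
    · rw [if_pos h1, if_pos h2]; linarith
    · rw [if_pos h1, if_neg h2]; linarith
    · rw [if_neg h1, if_pos h2]
      have hne : i ≠ j := by rw [Fin.ne_iff_vne]; omega
      have h3 := one_le_dist hn (show (Sum.inl i : Fin n ⊕ Fin n) ≠ Sum.inl j by simp [hne]) (m := m)
      have : (1:ℝ) ≤ ((glue n m).dist (Sum.inl i) (Sum.inl j) : ℝ) := by exact_mod_cast h3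
      linarith
    · rw [if_neg h1, if_neg h2]; linarith
  | .inr i, .inr j =>
    simp only [fL] at *
    by_cases h1 : (i:ℕ) ≤ m <;> by_cases h2 : (j:ℕ) ≤ m
    · rw [if_pos h1, if_pos h2]; linarith
    · rw [if_pos h1, if_neg h2]
      have hne : i ≠ j := by rw [Fin.ne_iff_vne]; omega
      have h3 := one_le_dist hn (show (Sum.inr i : Fin n ⊕ Fin n) ≠ Sum.inr j by simp [hne]) (m := m)
      have : (1:ℝ) ≤ ((glue n m).dist (Sum.inr i) (Sum.inr j) : ℝ) := by exact_mod_cast h3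
      linarith
    · rw [if_neg h1, if_pos h2]; linarith
    · rw [if_neg h1, if_neg h2]; linarith
  | .inr i, .inl j =>
    simp only [fL] at *
    split_ifs <;> linarith
  | .inl i, .inr j =>
    have hne : (Sum.inl i : Fin n ⊕ Fin n) ≠ Sum.inr j := by simp
    simp only [fL] at *
    by_cases h1 : (i:ℕ) ≤ m <;> by_cases h2 : (j:ℕ) ≤ m
    · rw [if_pos h1, if_pos h2]
      have h3 := one_le_dist hn hne (m := m)
      have : (1:ℝ) ≤ ((glue n m).dist (Sum.inl i) (Sum.inr j) : ℝ) := by exact_mod_cast h3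
      linarith
    · rw [if_pos h1, if_neg h2]
      have hna : ¬ (glue n m).Adj (.inl i) (.inr j) := by
        rw [adj_lr]; unfold OR.cross; omega
      have h3 := two_le_dist hn hne hna
      have : (2:ℝ) ≤ ((glue n m).dist (Sum.inl i) (Sum.inr j) : ℝ) := by exact_mod_cast h3
      linarith
    · rw [if_neg h1, if_pos h2]
      have hna : ¬ (glue n m).Adj (.inl i) (.inr j) := by
        rw [adj_lr]; unfold OR.cross; omega
      have h3 := two_le_dist hn hne hna
      have : (2:ℝ) ≤ ((glue n m).dist (Sum.inl i) (Sum.inr j) : ℝ) := by exact_mod_cast h3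
      linarith
    · rw [if_neg h1, if_neg h2]
      have h3 := three_le_dist_lr hn hm (i := i) (j := j) (by omega) (by omega)
      have : (3:ℝ) ≤ ((glue n m).dist (Sum.inl i) (Sum.inr j) : ℝ) := by exact_mod_cast h3
      linarith

lemma lower (hn : 5 ≤ n) (hm : 1 ≤ m) (hm' : m ≤ n - 2) (A : (Fin n ⊕ Fin n) → (Fin n ⊕ Fin n) → ℝ)
    (hA : IsCoupling (OR.rw (glue n m) (Sum.inl (⟨0, lt_of_lt_of_le (by norm_num) hn⟩ : Fin n)))
      (OR.rw (glue n m) (Sum.inr (⟨0, lt_of_lt_of_le (by norm_num) hn⟩ : Fin n))) A) :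
    (3 * (n : ℝ) - 3 * m - 4) / ((n : ℝ) + m)
      ≤ ∑ u : Fin n ⊕ Fin n, ∑ v : Fin n ⊕ Fin n, A u v * ((glue n m).dist u v : ℝ) := by
  obtain ⟨hA0, -, hrow, hcol⟩ := hA
  have hrow' : ∀ u, ∑ v : Fin n ⊕ Fin n, A u v
      = OR.rw (glue n m) (Sum.inl (⟨0, lt_of_lt_of_le (by norm_num) hn⟩ : Fin n)) u :=
    fun u => by rw [← finsum_eq_sum_of_fintype]; exact hrow u
  have hcol' : ∀ v, ∑ u : Fin n ⊕ Fin n, A u v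
      = OR.rw (glue n m) (Sum.inr (⟨0, lt_of_lt_of_le (by norm_num) hn⟩ : Fin n)) v :=
    fun v => by rw [← finsum_eq_sum_of_fintype]; exact hcol v
  set c : ℝ := ((n:ℝ)+(m:ℝ))⁻¹ with hc
  have step1 : ∑ u : Fin n ⊕ Fin n, ∑ v : Fin n ⊕ Fin n, A u v * (fL n m u - fL n m v)
      ≤ ∑ u : Fin n ⊕ Fin n, ∑ v : Fin n ⊕ Fin n, A u v * ((glue n m).dist u v : ℝ) :=
    Finset.sum_le_sum fun u _ => Finset.sum_le_sum fun v _ =>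
      mul_le_mul_of_nonneg_left (fL_lip hn hm u v) (hA0 u v)
  have step2 : ∑ u : Fin n ⊕ Fin n, ∑ v : Fin n ⊕ Fin n, A u v * (fL n m u - fL n m v)
      = (∑ u : Fin n ⊕ Fin n, fL n m u * OR.rw (glue n m) (Sum.inl (⟨0, lt_of_lt_of_le (by norm_num) hn⟩ : Fin n)) u)
        - ∑ v : Fin n ⊕ Fin n, fL n m v * OR.rw (glue n m) (Sum.inr (⟨0, lt_of_lt_of_le (by norm_num) hn⟩ : Fin n)) v := by
    have e : ∀ u : Fin n ⊕ Fin n, ∑ v : Fin n ⊕ Fin n, A u v * (fL n m u - fL n m v)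
        = fL n m u * (∑ v : Fin n ⊕ Fin n, A u v) - ∑ v : Fin n ⊕ Fin n, A u v * fL n m v := by
      intro u
      rw [Finset.mul_sum, ← Finset.sum_sub_distrib]
      exact Finset.sum_congr rfl fun v _ => by ring
    rw [Finset.sum_congr rfl fun u _ => e u, Finset.sum_sub_distrib]
    congr 1
    · exact Finset.sum_congr rfl fun u _ => by rw [hrow' u]
    · rw [Finset.sum_comm]
      refine Finset.sum_congr rfl fun v _ => ?_
      rw [← hcol' v, Finset.mul_sum]
      exact Finset.sum_congr rfl fun u _ => by ring
  have comp1 : ∑ u : Fin n ⊕ Fin n, fL n m u * OR.rw (glue n m) (Sum.inl (⟨0, lt_of_lt_of_le (by norm_num) hn⟩ : Fin n)) u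
      = (m:ℝ) * (2*c) + ((n:ℝ) - (m:ℝ) - 1) * (3*c) + ((m:ℝ)+1) * c := by
    rw [rw_l0 hn hm hm']
    dsimp only
    rw [Fintype.sum_sum_type]
    have hAdj1 : ∀ i : Fin n,
        (glue n m).Adj (Sum.inl (⟨0, lt_of_lt_of_le (by norm_num) hn⟩ : Fin n)) (Sum.inl i) ↔ 1 ≤ (i:ℕ) := by
      intro i; rw [adj_ll, Fin.ne_iff_vne]; simp only [Fin.val_mk]; omega
    have hAdj2 : ∀ j : Fin n,
        (glue n m).Adj (Sum.inl (⟨0, lt_of_lt_of_le (by norm_num) hn⟩ : Fin n)) (Sum.inr j) ↔ (j:ℕ) ≤ m := by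
      intro j; rw [adj_lr]; unfold OR.cross; simp only [Fin.val_mk, true_and, and_true]; omega
    have e1 : ∀ i : Fin n, fL n m (Sum.inl i)
          * (if (glue n m).Adj (Sum.inl (⟨0, lt_of_lt_of_le (by norm_num) hn⟩ : Fin n)) (Sum.inl i) then c else 0)
        = (fun k : ℕ => (if 1 ≤ k ∧ k ≤ m then 2*c else 0) + (if m+1 ≤ k then 3*c else 0)) (i:ℕ) := by
      intro i
      simp only [fL, hAdj1]
      split_ifs <;> first | (exfalso; omega) | ring
    have e2 : ∀ j : Fin n, fL n m (Sum.inr j)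
          * (if (glue n m).Adj (Sum.inl (⟨0, lt_of_lt_of_le (by norm_num) hn⟩ : Fin n)) (Sum.inr j) then c else 0)
        = (fun k : ℕ => if k ≤ m then c else 0) (j:ℕ) := by
      intro j
      simp only [fL, hAdj2]
      split_ifs <;> first | (exfalso; omega) | ring
    rw [Finset.sum_congr rfl (fun i _ => e1 i), Finset.sum_congr rfl (fun j _ => e2 j)]
    rw [Fin.sum_univ_eq_sum_range
        (fun k : ℕ => (if 1 ≤ k ∧ k ≤ m then 2*c else 0) + (if m+1 ≤ k then 3*c else 0)) n,
      Fin.sum_univ_eq_sum_range (fun k : ℕ => if k ≤ m then c else 0) n]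
    rw [Finset.sum_add_distrib, sum_ite_card, sum_ite_card, sum_ite_card]
    have f1 : (range n).filter (fun k => 1 ≤ k ∧ k ≤ m) = Finset.Ico 1 (m+1) := by
      ext k; simp; omega
    have f2 : (range n).filter (fun k => m+1 ≤ k) = Finset.Ico (m+1) n := by
      ext k; simp; omega
    have f3 : (range n).filter (fun k => k ≤ m) = Finset.Ico 0 (m+1) := by
      ext k; simp; omega
    rw [f1, f2, f3, Nat.card_Ico, Nat.card_Ico, Nat.card_Ico]
    have c1 : ((m + 1 - 1 : ℕ) : ℝ) = (m:ℝ) := by simp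
    have c2 : ((n - (m+1) : ℕ) : ℝ) = (n:ℝ) - (m:ℝ) - 1 := by
      rw [Nat.cast_sub (by omega)]; push_cast; ring
    have c3 : ((m + 1 - 0 : ℕ) : ℝ) = (m:ℝ) + 1 := by push_cast; ring
    rw [c1, c2, c3]
  have comp2 : ∑ v : Fin n ⊕ Fin n, fL n m v * OR.rw (glue n m) (Sum.inr (⟨0, lt_of_lt_of_le (by norm_num) hn⟩ : Fin n)) v
      = ((m:ℝ)+1) * (2*c) + (m:ℝ) * c := by
    rw [rw_r0 hn hm hm']
    dsimp only
    rw [Fintype.sum_sum_type]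
    have hAdj3 : ∀ i : Fin n,
        (glue n m).Adj (Sum.inr (⟨0, lt_of_lt_of_le (by norm_num) hn⟩ : Fin n)) (Sum.inl i) ↔ (i:ℕ) ≤ m := by
      intro i; rw [adj_rl]; unfold OR.cross; simp only [Fin.val_mk, true_and, and_true]; omega
    have hAdj4 : ∀ j : Fin n,
        (glue n m).Adj (Sum.inr (⟨0, lt_of_lt_of_le (by norm_num) hn⟩ : Fin n)) (Sum.inr j) ↔ 1 ≤ (j:ℕ) := by
      intro j; rw [adj_rr, Fin.ne_iff_vne]; simp only [Fin.val_mk]; omega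
    have e3 : ∀ i : Fin n, fL n m (Sum.inl i)
          * (if (glue n m).Adj (Sum.inr (⟨0, lt_of_lt_of_le (by norm_num) hn⟩ : Fin n)) (Sum.inl i) then c else 0)
        = (fun k : ℕ => if k ≤ m then 2*c else 0) (i:ℕ) := by
      intro i
      simp only [fL, hAdj3]
      split_ifs <;> first | (exfalso; omega) | ring
    have e4 : ∀ j : Fin n, fL n m (Sum.inr j)
          * (if (glue n m).Adj (Sum.inr (⟨0, lt_of_lt_of_le (by norm_num) hn⟩ : Fin n)) (Sum.inr j) then c else 0)
        = (fun k : ℕ => if 1 ≤ k ∧ k ≤ m then c else 0) (j:ℕ) := by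
      intro j
      simp only [fL, hAdj4]
      split_ifs <;> first | (exfalso; omega) | ring
    rw [Finset.sum_congr rfl (fun i _ => e3 i), Finset.sum_congr rfl (fun j _ => e4 j)]
    rw [Fin.sum_univ_eq_sum_range (fun k : ℕ => if k ≤ m then 2*c else 0) n,
      Fin.sum_univ_eq_sum_range (fun k : ℕ => if 1 ≤ k ∧ k ≤ m then c else 0) n]
    rw [sum_ite_card, sum_ite_card]
    have f3 : (range n).filter (fun k => k ≤ m) = Finset.Ico 0 (m+1) := by
      ext k; simp; omega
    have f1 : (range n).filter (fun k => 1 ≤ k ∧ k ≤ m) = Finset.Ico 1 (m+1) := by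
      ext k; simp; omega
    rw [f1, f3, Nat.card_Ico, Nat.card_Ico]
    have c1 : ((m + 1 - 1 : ℕ) : ℝ) = (m:ℝ) := by simp
    have c3 : ((m + 1 - 0 : ℕ) : ℝ) = (m:ℝ) + 1 := by push_cast; ring
    rw [c1, c3]
  have key : (3 * (n : ℝ) - 3 * m - 4) / ((n : ℝ) + m)
      = ((m:ℝ) * (2*c) + ((n:ℝ) - (m:ℝ) - 1) * (3*c) + ((m:ℝ)+1) * c)
        - (((m:ℝ)+1) * (2*c) + (m:ℝ) * c) := by
    rw [hc]
    have hne : ((n:ℝ) + (m:ℝ)) ≠ 0 := ne_of_gt (cast_npm_pos hn)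
    field_simp
    ring
  rw [key, ← comp1, ← comp2, ← step2]
  exact step1


end GW

theorem glue_wasserstein_bridge (n m : ℕ) (hn : 5 ≤ n) (hm : 1 ≤ m) (hm' : m ≤ n - 2) :
    OR.W (OR.glue n m) (OR.rw (OR.glue n m) (Sum.inl (⟨0, by omega⟩ : Fin n)))
        (OR.rw (OR.glue n m) (Sum.inr (⟨0, by omega⟩ : Fin n)))
      = (3 * (n : ℝ) - 3 * m - 4) / ((n : ℝ) + m) := by
  have h : m + 1 < n := by omega
  have hcpl : OR.IsCoupling (OR.rw (OR.glue n m) (Sum.inl (⟨0, by omega⟩ : Fin n)))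
      (OR.rw (OR.glue n m) (Sum.inr (⟨0, by omega⟩ : Fin n))) (GW.cpl n m h) := by
    refine ⟨?_, Set.toFinite _, ?_, ?_⟩
    · intro u v
      unfold GW.cpl
      split_ifs
      · positivity
      · exact le_rfl
    · intro u
      rw [finsum_eq_sum_of_fintype]
      exact GW.row_marg hn hm hm' h u
    · intro v
      rw [finsum_eq_sum_of_fintype]
      exact GW.col_marg hn hm hm' h v
  have hcost : (∑ᶠ u, ∑ᶠ v, GW.cpl n m h u v * ((OR.glue n m).dist u v : ℝ))
      = (3 * (n : ℝ) - 3 * m - 4) / ((n : ℝ) + m) := by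
    rw [finsum_eq_sum_of_fintype]
    rw [Finset.sum_congr rfl (fun u _ => finsum_eq_sum_of_fintype _)]
    exact GW.cost_eq hn hm hm' h
  unfold OR.W
  apply le_antisymm
  · apply csInf_le
    · refine ⟨0, ?_⟩
      rintro r ⟨A, ⟨hA0, -, -, -⟩, rfl⟩
      rw [finsum_eq_sum_of_fintype]
      refine Finset.sum_nonneg fun u _ => ?_
      rw [finsum_eq_sum_of_fintype]
      exact Finset.sum_nonneg fun v _ => mul_nonneg (hA0 u v) (Nat.cast_nonneg _)
    · exact ⟨GW.cpl n m h, hcpl, hcost.symm⟩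
  · apply le_csInf
    · exact ⟨_, GW.cpl n m h, hcpl, rfl⟩
    · rintro r ⟨A, hA, rfl⟩
      rw [finsum_eq_sum_of_fintype]
      rw [Finset.sum_congr rfl (fun u _ => finsum_eq_sum_of_fintype _)]
      exact GW.lower hn hm hm' A hA
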